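/- arXiv:1301.2795 — 2 statements merged into one kernel-verified Lean document; each statement's English description precedes it below -/
import Mathlib

section
/- Let h, q ≥ 1 be integers, H = q·h, let α = (α₀, …, α_{q−1}) ∈ (ℤ/hℤ)^q, and let f : ℤ/hℤ → ℂ. Define φ_α : ℤ/Hℤ → ℤ/hℤ by φ_α(j·h + k) = k + α_j (mod h) for 0 ≤ k < h, 0 ≤ j < q, and set F_α = f ∘ φ_α. Then for every integer s, the cyclic correlation of F_α at t = s·h satisfies the exact identity RC_{F_α}(s·h) = (1/q)·Σ_{k=0}^{q−1} RC_f(α_{(k+s) mod q} − α_k). -/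
/-- The cyclic correlation of `f : ℤ/hℤ → ℂ` at `t`:
`RC_f(t) = (1/h)·Σ_{j ∈ ℤ/hℤ} f(j+t)·conj(f(j))`. -/
noncomputable def cyclicCorr (h : ℕ) [NeZero h] (f : ZMod h → ℂ) (t : ZMod h) : ℂ :=
  (h : ℂ)⁻¹ * ∑ j : ZMod h, f (j + t) * (starRingEnd ℂ) (f j)

/-- The projection `φ_α : ℤ/Hℤ → ℤ/hℤ` (for `H = q·h` and a tuple `α ∈ (ℤ/hℤ)^q`),
`φ_α(j·h + k) = k + α_j (mod h)` for `0 ≤ k < h`, `0 ≤ j < q`. -/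
noncomputable def phiMap {m : ℕ} (h q : ℕ) (α : ZMod q → ZMod h) (x : ZMod m) : ZMod h :=
  ((x.val % h : ℕ) : ZMod h) + α ((x.val / h : ℕ) : ZMod q)


/-- Auxiliary embedding `(j, k) ↦ j·h + k` from `ZMod q × ZMod h` into `ZMod (q*h)`. -/
noncomputable def emb (h q : ℕ) (p : ZMod q × ZMod h) : ZMod (q * h) :=
  ((p.1.val * h + p.2.val : ℕ) : ZMod (q * h))

lemma emb_val (h q : ℕ) [NeZero h] [NeZero q] (p : ZMod q × ZMod h) :
    (emb h q p).val = p.1.val * h + p.2.val := by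
  apply ZMod.val_natCast_of_lt
  have h1 : p.1.val < q := ZMod.val_lt p.1
  have h2 : p.2.val < h := ZMod.val_lt p.2
  calc p.1.val * h + p.2.val < p.1.val * h + h := by omega
    _ = (p.1.val + 1) * h := by ring
    _ ≤ q * h := Nat.mul_le_mul_right h h1

lemma phiMap_emb (h q : ℕ) [NeZero h] [NeZero q] (α : ZMod q → ZMod h)
    (p : ZMod q × ZMod h) :
    phiMap h q α (emb h q p) = p.2 + α p.1 := by
  unfold phiMap
  rw [emb_val]
  have hd : (p.1.val * h + p.2.val) / h = p.1.val := by
    rw [mul_comm, Nat.mul_add_div (NeZero.pos h), Nat.div_eq_of_lt (ZMod.val_lt p.2), add_zero]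
  have hm : (p.1.val * h + p.2.val) % h = p.2.val := by
    rw [mul_comm, Nat.mul_add_mod, Nat.mod_eq_of_lt (ZMod.val_lt p.2)]
  rw [hd, hm, ZMod.natCast_val, ZMod.natCast_val, ZMod.cast_id, ZMod.cast_id]

lemma emb_bijective (h q : ℕ) [NeZero h] [NeZero q] :
    Function.Bijective (emb h q) := by
  rw [Fintype.bijective_iff_injective_and_card]
  constructor
  · intro p1 p2 hp
    have hv : p1.1.val * h + p2.2.val = p1.1.val * h + p2.2.val := rfl
    have heq : p1.1.val * h + p1.2.val = p2.1.val * h + p2.2.val := by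
      rw [← emb_val h q, ← emb_val h q, hp]
    have hd : ∀ p : ZMod q × ZMod h, (p.1.val * h + p.2.val) / h = p.1.val := fun p => by
      rw [mul_comm, Nat.mul_add_div (NeZero.pos h), Nat.div_eq_of_lt (ZMod.val_lt p.2), add_zero]
    have hm : ∀ p : ZMod q × ZMod h, (p.1.val * h + p.2.val) % h = p.2.val := fun p => by
      rw [mul_comm, Nat.mul_add_mod, Nat.mod_eq_of_lt (ZMod.val_lt p.2)]
    have e1 : p1.1.val = p2.1.val := by rw [← hd p1, ← hd p2, heq]
    have e2 : p1.2.val = p2.2.val := by rw [← hm p1, ← hm p2, heq]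
    exact Prod.ext (ZMod.val_injective q e1) (ZMod.val_injective h e2)
  · simp [ZMod.card, Nat.mul_comm]

lemma emb_add_shift (h q : ℕ) [NeZero h] [NeZero q] (j : ZMod q) (k : ZMod h) (s : ℤ) :
    emb h q (j, k) + (s : ZMod (q * h)) * (h : ZMod (q * h))
      = emb h q (j + (s : ZMod q), k) := by
  unfold emb
  have hq : (q : ℤ) ∣ ((j.val : ℤ) + s) - ((j + (s : ZMod q)).val : ℤ) := by
    have : (((j.val : ℤ) + s : ℤ) : ZMod q) = (((j + (s : ZMod q)).val : ℤ) : ZMod q) := by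
      push_cast
      simp [ZMod.natCast_val, ZMod.cast_id]
    exact Int.ModEq.dvd ((ZMod.intCast_eq_intCast_iff _ _ _).mp this).symm
  have key : (((j.val : ℤ) * h + k.val + s * h : ℤ) : ZMod (q * h))
      = ((((j + (s : ZMod q)).val : ℤ) * h + k.val : ℤ) : ZMod (q * h)) := by
    rw [ZMod.intCast_eq_intCast_iff, Int.modEq_iff_dvd]
    have h2 := mul_dvd_mul_right hq (h : ℤ)
    have h3 : (((j + (s : ZMod q)).val : ℤ) * h + k.val) - ((j.val : ℤ) * h + k.val + s * h)
        = -((((j.val : ℤ) + s) - ((j + (s : ZMod q)).val : ℤ)) * h) := by ring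
    rw [h3]
    push_cast
    exact dvd_neg.mpr h2
  calc ((j.val * h + k.val : ℕ) : ZMod (q * h)) + (s : ZMod (q * h)) * (h : ZMod (q * h))
      = (((j.val : ℤ) * h + k.val + s * h : ℤ) : ZMod (q * h)) := by push_cast; ring
    _ = ((((j + (s : ZMod q)).val : ℤ) * h + k.val : ℤ) : ZMod (q * h)) := key
    _ = (((j + (s : ZMod q)).val * h + k.val : ℕ) : ZMod (q * h)) := by push_cast; ring

/-- For `H = q·h`, `α ∈ (ℤ/hℤ)^q`, `F_α = f ∘ φ_α` and any integer `s`,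
the cyclic correlation of `F_α` at `t = s·h` satisfies the exact identity
`RC_{F_α}(s·h) = (1/q)·Σ_{k=0}^{q−1} RC_f(α_{(k+s) mod q} − α_k)`. -/
theorem cyclicCorr_comp_phiMap_at_multiples
    (h q : ℕ) [NeZero h] [NeZero q] (α : ZMod q → ZMod h) (f : ZMod h → ℂ) (s : ℤ) :
    cyclicCorr (q * h) (fun x => f (phiMap h q α x))
        ((s : ZMod (q * h)) * (h : ZMod (q * h)))
      = (q : ℂ)⁻¹ * ∑ k : ZMod q, cyclicCorr h f (α (k + (s : ZMod q)) - α k) := by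
  classical
  -- Reindex the big sum over `ZMod (q*h)` by `ZMod q × ZMod h`.
  have hsum : ∑ p : ZMod q × ZMod h,
        f (p.2 + α (p.1 + (s : ZMod q))) * (starRingEnd ℂ) (f (p.2 + α p.1))
      = ∑ x : ZMod (q * h),
        f (phiMap h q α (x + (s : ZMod (q * h)) * (h : ZMod (q * h)))) *
          (starRingEnd ℂ) (f (phiMap h q α x)) := by
    apply Fintype.sum_bijective (emb h q) (emb_bijective h q)
    intro p
    rw [emb_add_shift h q p.1 p.2 s]
    rw [show emb h q (p.1 + (s : ZMod q), p.2) = emb h q ((p.1 + (s : ZMod q), p.2) : ZMod q × ZMod h) from rfl]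
    rw [phiMap_emb h q α ((p.1 + (s : ZMod q), p.2) : ZMod q × ZMod h),
      phiMap_emb h q α p]
  -- Rewrite the inner correlation sums.
  have inner : ∀ j : ZMod q,
      ∑ t : ZMod h, f (t + (α (j + (s : ZMod q)) - α j)) * (starRingEnd ℂ) (f t)
        = ∑ k : ZMod h, f (k + α (j + (s : ZMod q))) * (starRingEnd ℂ) (f (k + α j)) := by
    intro j
    refine (Fintype.sum_equiv (Equiv.addRight (α j))
      (fun k => f (k + α (j + (s : ZMod q))) * (starRingEnd ℂ) (f (k + α j)))
      (fun t => f (t + (α (j + (s : ZMod q)) - α j)) * (starRingEnd ℂ) (f t))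
      (fun k => ?_)).symm
    simp only [Equiv.coe_addRight]
    congr 2
    ring
  unfold cyclicCorr
  rw [← hsum, Fintype.sum_prod_type]
  have hq0 : (q : ℂ) ≠ 0 := Nat.cast_ne_zero.mpr (NeZero.ne q)
  have hh0 : (h : ℂ) ≠ 0 := Nat.cast_ne_zero.mpr (NeZero.ne h)
  rw [Finset.mul_sum]
  push_cast
  rw [mul_inv]
  rw [Finset.mul_sum]
  refine Finset.sum_congr rfl fun j _ => ?_
  rw [inner j]
  ring
end

section
/- Let h, q ≥ 1 be integers, H = q·h, and let f : ℤ/hℤ → ℂ have zero mean (Σ_{j ∈ ℤ/hℤ} f(j) = 0). Let α = (α₀, …, α_{q−1}) be uniformly distributed on (ℤ/hℤ)^q (i.e. average over all h^q tuples), and set F_α = f ∘ φ_α. Then for every integer s with 1 ≤ s ≤ q − 1, the expectation of the cyclic correlation of F_α at t = s·h vanishes: E_α[ RC_{F_α}(s·h) ] = 0. -/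
lemma sum_shift {h : ℕ} [NeZero h] (f : ZMod h → ℂ) (hf : ∑ j : ZMod h, f j = 0)
    (k : ZMod h) : ∑ v : ZMod h, f (k + v) = 0 := by
  simpa [hf] using Equiv.sum_comp (Equiv.addLeft k) f

lemma sum_fun_two {h q : ℕ} [NeZero h] [NeZero q] (b b' : ZMod q) (hbb : b ≠ b')
    (g g' : ZMod h → ℂ) (hg : ∑ v : ZMod h, g v = 0) :
    ∑ α : ZMod q → ZMod h, g (α b') * g' (α b) = 0 := by
  classical
  rw [← Equiv.sum_comp (Equiv.piSplitAt b' (fun _ => ZMod h)).symm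
      (fun α => g (α b') * g' (α b)), Fintype.sum_prod_type]
  have h1 : ∀ (v : ZMod h) (β : {j : ZMod q // j ≠ b'} → ZMod h),
      (Equiv.piSplitAt b' (fun _ => ZMod h)).symm (v, β) b' = v := by
    intro v β; simp [Equiv.piSplitAt_symm_apply]
  have h2 : ∀ (v : ZMod h) (β : {j : ZMod q // j ≠ b'} → ZMod h),
      (Equiv.piSplitAt b' (fun _ => ZMod h)).symm (v, β) b = β ⟨b, hbb⟩ := by
    intro v β; simp [Equiv.piSplitAt_symm_apply, hbb]
  simp only [h1, h2]
  simp only [← Finset.mul_sum]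
  rw [← Finset.sum_mul, hg, zero_mul]

/-- Let `f : ℤ/hℤ → ℂ` have zero mean and let `α` be uniformly
distributed on `(ℤ/hℤ)^q` (average over all `h^q` tuples).  Then for every integer `s`
with `1 ≤ s ≤ q − 1`, the expectation of the cyclic correlation of `F_α = f ∘ φ_α` at
`t = s·h` vanishes. -/
theorem expectation_cyclicCorr_comp_phiMap_eq_zero
    (h q : ℕ) [NeZero h] [NeZero q] (f : ZMod h → ℂ)
    (hf : ∑ j : ZMod h, f j = 0)
    (s : ℕ) (hs1 : 1 ≤ s) (hs2 : s ≤ q - 1) :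
    ((h : ℂ) ^ q)⁻¹ *
        ∑ α : ZMod q → ZMod h,
          cyclicCorr (q * h) (fun x => f (phiMap h q α x)) ((s * h : ℕ) : ZMod (q * h))
      = 0 := by
  have hq0 : q ≠ 0 := NeZero.ne q
  have hh0 : h ≠ 0 := NeZero.ne h
  have hsq : s < q := by omega
  suffices hsum : ∑ α : ZMod q → ZMod h,
      cyclicCorr (q * h) (fun x => f (phiMap h q α x)) ((s * h : ℕ) : ZMod (q * h)) = 0 by
    rw [hsum, mul_zero]
  simp only [cyclicCorr]
  rw [← Finset.mul_sum, Finset.sum_comm, mul_eq_zero]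
  right
  apply Finset.sum_eq_zero
  intro x _
  set t : ZMod (q * h) := ((s * h : ℕ) : ZMod (q * h)) with ht_def
  have htval : t.val = s * h := by
    rw [ht_def, ZMod.val_natCast, Nat.mod_eq_of_lt]
    exact (Nat.mul_lt_mul_right (Nat.pos_of_ne_zero hh0)).mpr hsq
  have hy : (x + t).val = (x.val + s * h) % (q * h) := by
    rw [ZMod.val_add, htval]
  have hk : (x + t).val % h = x.val % h := by
    rw [hy, Nat.mod_mod_of_dvd _ (dvd_mul_left h q), Nat.add_mul_mod_self_right]
  have hb : (((x + t).val / h : ℕ) : ZMod q) = ((x.val / h : ℕ) : ZMod q) + (s : ZMod q) := by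
    rw [hy]
    have ha : (x.val + s * h) % (q * h) / h = (x.val / h + s) % q := by
      generalize x.val = a
      rw [mul_comm q h, Nat.mod_mul_right_div_self,
        Nat.add_mul_div_right _ _ (Nat.pos_of_ne_zero hh0)]
    rw [ha, ZMod.natCast_mod]
    push_cast
    ring
  set k : ZMod h := ((x.val % h : ℕ) : ZMod h)
  set b : ZMod q := ((x.val / h : ℕ) : ZMod q)
  have hbb : b ≠ b + (s : ZMod q) := by
    intro hEq
    have hs0 : (s : ZMod q) = 0 := by
      have := hEq.symm
      rwa [add_eq_left] at this
    have : q ∣ s := (ZMod.natCast_eq_zero_iff s q).mp hs0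
    have := Nat.le_of_dvd (by omega) this
    omega
  simp only [phiMap, hk, hb]
  exact sum_fun_two b (b + (s : ZMod q)) hbb (fun v => f (k + v))
    (fun v => (starRingEnd ℂ) (f (k + v))) (sum_shift f hf k)
end
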